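/- arXiv:1810.10067 — 2 statements merged into one kernel-verified Lean document; each statement's English description precedes it below -/
import Mathlib

section
/- Let A ∈ B(H) have Cartesian decomposition A = P + iQ, where P and Q are selfadjoint, and let 0 ≤ α ≤ 1. Then for all vectors x, y ∈ H, |⟨Ax, y⟩| ≤ ‖|P|^α x‖ · ‖|P|^{1-α} y‖ + ‖|Q|^α x‖ · ‖|Q|^{1-α} y‖. -/
open scoped InnerProductSpace
open ContinuousLinearMap

/-- The absolute value `|A| = (A^*A)^{1/2}` of a bounded operator, via the
continuous functional calculus. -/
noncomputable def oabs {H : Type*} [NormedAddCommGroup H] [InnerProductSpace ℂ H]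
    [CompleteSpace H] (A : H →L[ℂ] H) : H →L[ℂ] H :=
  cfc Real.sqrt (adjoint A * A)

section Aux

variable {H : Type*} [NormedAddCommGroup H] [InnerProductSpace ℂ H] [CompleteSpace H]

lemma oabs_eq_cfc_abs (P : H →L[ℂ] H) (hP : IsSelfAdjoint P) :
    oabs P = cfc (fun t : ℝ => |t|) P := by
  have h1 : adjoint P * P = cfc (fun t : ℝ => t * t) P := by
    rw [cfc_mul (fun t : ℝ => t) (fun t : ℝ => t) P continuous_id.continuousOn
      continuous_id.continuousOn, cfc_id' ℝ P, hP.adjoint_eq]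
  rw [oabs, h1, ← cfc_comp' Real.sqrt (fun t : ℝ => t * t) P
    Real.continuous_sqrt.continuousOn (continuous_id.mul continuous_id).continuousOn hP]
  exact cfc_congr fun t _ => Real.sqrt_mul_self_eq_abs t

lemma cfc_rpow_oabs (P : H →L[ℂ] H) (hP : IsSelfAdjoint P) {β : ℝ} (hβ : 0 ≤ β) :
    cfc (fun t : ℝ => t ^ β) (oabs P) = cfc (fun t : ℝ => |t| ^ β) P := by
  rw [oabs_eq_cfc_abs P hP, ← cfc_comp' (fun t : ℝ => t ^ β) (fun t : ℝ => |t|) P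
    (Real.continuous_rpow_const hβ).continuousOn continuous_abs.continuousOn hP]

lemma norm_cfc_eq (P : H →L[ℂ] H) (hP : IsSelfAdjoint P) (f g : ℝ → ℝ)
    (hf : Continuous f) (hg : Continuous g) (hfg : ∀ t, f t * f t = g t * g t) (y : H) :
    ‖cfc f P y‖ = ‖cfc g P y‖ := by
  have key : ∀ h : ℝ → ℝ, Continuous h →
      (‖cfc h P y‖ : ℝ) ^ 2 = Complex.re ⟪cfc (fun t => h t * h t) P y, y⟫_ℂ := by
    intro h hh
    have hsa : IsSelfAdjoint (cfc h P) := cfc_predicate h P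
    have h2 : ⟪cfc h P y, cfc h P y⟫_ℂ = ⟪cfc (fun t => h t * h t) P y, y⟫_ℂ := by
      rw [cfc_mul h h P hh.continuousOn hh.continuousOn, mul_apply_eq_comp]
      nth_rewrite 2 [← hsa.adjoint_eq]
      rw [adjoint_inner_right]
    rw [← inner_self_eq_norm_sq (𝕜 := ℂ), h2]; rfl
  have h1 := key f hf
  have h2 := key g hg
  rw [funext hfg] at h1
  have h3 := h1.trans h2.symm
  nlinarith [norm_nonneg (cfc f P y), norm_nonneg (cfc g P y)]

lemma key_ineq (P : H →L[ℂ] H) (hP : IsSelfAdjoint P) (α : ℝ) (hα0 : 0 ≤ α) (hα1 : α ≤ 1)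
    (x y : H) :
    ‖⟪P x, y⟫_ℂ‖ ≤
      ‖cfc (fun t : ℝ => t ^ α) (oabs P) x‖ * ‖cfc (fun t : ℝ => t ^ (1 - α)) (oabs P) y‖ := by
  by_cases hα : α = 1
  · subst hα
    have hsa : IsSelfAdjoint (oabs P) := cfc_predicate _ _
    have e1 : cfc (fun t : ℝ => t ^ (1 : ℝ)) (oabs P) = oabs P := by
      rw [cfc_rpow_oabs P hP zero_le_one, oabs_eq_cfc_abs P hP]
      exact cfc_congr fun t _ => Real.rpow_one _
    have e2 : cfc (fun t : ℝ => t ^ ((1 : ℝ) - 1)) (oabs P) = 1 := by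
      have h0 : cfc (fun t : ℝ => t ^ ((1:ℝ) - 1)) (oabs P) = cfc (fun _ : ℝ => (1:ℝ)) (oabs P) :=
        cfc_congr fun t _ => by rw [sub_self, Real.rpow_zero]
      rw [h0, cfc_const 1 (oabs P) hsa, map_one]
    rw [e1, e2]
    simp only [one_apply_eq_self]
    calc ‖⟪P x, y⟫_ℂ‖ ≤ ‖P x‖ * ‖y‖ := norm_inner_le_norm _ _
      _ = ‖oabs P x‖ * ‖y‖ := by
          congr 1
          have hPx : P x = cfc (fun t : ℝ => t) P x := by rw [cfc_id' ℝ P]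
          rw [hPx, oabs_eq_cfc_abs P hP]
          exact norm_cfc_eq P hP _ _ continuous_id continuous_abs
            (fun t => (abs_mul_abs_self t).symm) x
  · have hαlt : α < 1 := lt_of_le_of_ne hα1 hα
    set β : ℝ := 1 - α with hβdef
    have hβ : 0 < β := by simp only [hβdef]; linarith
    set f : ℝ → ℝ := fun t => (max t 0) ^ β - (max (-t) 0) ^ β with hfdef
    set g : ℝ → ℝ := fun t => |t| ^ α with hgdef
    have hfc : Continuous f :=
      ((Real.continuous_rpow_const hβ.le).comp (continuous_id.max continuous_const)).sub
        ((Real.continuous_rpow_const hβ.le).comp (continuous_neg.max continuous_const))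
    have hgc : Continuous g := (Real.continuous_rpow_const hα0).comp continuous_abs
    have habsc : Continuous fun t : ℝ => |t| ^ β :=
      (Real.continuous_rpow_const hβ.le).comp continuous_abs
    have hβα : β + α = 1 := by rw [hβdef]; ring
    have hfg : ∀ t : ℝ, f t * g t = t := by
      intro t
      rcases lt_trichotomy t 0 with ht | rfl | ht
      · have h1 : max t 0 = 0 := max_eq_right ht.le
        have h2 : max (-t) 0 = -t := max_eq_left (by linarith)
        have h3 : |t| = -t := abs_of_neg ht
        simp only [hfdef, hgdef, h1, h2, h3, Real.zero_rpow hβ.ne', zero_sub, neg_mul]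
        rw [← Real.rpow_add (by linarith), hβα, Real.rpow_one, neg_neg]
      · simp [hfdef, hgdef, Real.zero_rpow hβ.ne']
      · have h1 : max t 0 = t := max_eq_left ht.le
        have h2 : max (-t) 0 = 0 := max_eq_right (by linarith)
        have h3 : |t| = t := abs_of_pos ht
        simp only [hfdef, hgdef, h1, h2, h3, Real.zero_rpow hβ.ne', sub_zero]
        rw [← Real.rpow_add ht, hβα, Real.rpow_one]
    have hP_eq : cfc f P * cfc g P = P := by
      have hcongr := cfc_congr (a := P) (f := fun t => f t * g t) (g := fun t : ℝ => t)
        (fun t _ => hfg t)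
      rw [← cfc_mul f g P hfc.continuousOn hgc.continuousOn, hcongr, cfc_id' ℝ P]
    have hsq : ∀ t : ℝ, f t * f t = |t| ^ β * (|t| ^ β) := by
      intro t
      rcases lt_trichotomy t 0 with ht | rfl | ht
      · have h1 : max t 0 = 0 := max_eq_right ht.le
        have h2 : max (-t) 0 = -t := max_eq_left (by linarith)
        have h3 : |t| = -t := abs_of_neg ht
        simp only [hfdef, h1, h2, h3, Real.zero_rpow hβ.ne', zero_sub]
        ring
      · simp [hfdef, Real.zero_rpow hβ.ne']
      · have h1 : max t 0 = t := max_eq_left ht.le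
        have h2 : max (-t) 0 = 0 := max_eq_right (by linarith)
        have h3 : |t| = t := abs_of_pos ht
        simp only [hfdef, h1, h2, h3, Real.zero_rpow hβ.ne', sub_zero]
    calc ‖⟪P x, y⟫_ℂ‖ = ‖⟪cfc g P x, cfc f P y⟫_ℂ‖ := by
          conv_lhs => rw [← hP_eq]
          rw [mul_apply_eq_comp]
          congr 1
          have hsa : IsSelfAdjoint (cfc f P) := cfc_predicate f P
          nth_rewrite 1 [← hsa.adjoint_eq]
          rw [adjoint_inner_left]
      _ ≤ ‖cfc g P x‖ * ‖cfc f P y‖ := norm_inner_le_norm _ _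
      _ = ‖cfc (fun t : ℝ => t ^ α) (oabs P) x‖ * ‖cfc (fun t : ℝ => t ^ (1 - α)) (oabs P) y‖ := by
          congr 1
          · rw [cfc_rpow_oabs P hP hα0, hgdef]
          · rw [cfc_rpow_oabs P hP (by linarith : (0:ℝ) ≤ 1 - α), ← hβdef]
            exact norm_cfc_eq P hP f _ hfc habsc hsq y

end Aux

theorem stmt10 {H : Type*} [NormedAddCommGroup H] [InnerProductSpace ℂ H] [CompleteSpace H]
    (A P Q : H →L[ℂ] H) (hP : IsSelfAdjoint P) (hQ : IsSelfAdjoint Q)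
    (hA : A = P + Complex.I • Q)
    (α : ℝ) (hα0 : 0 ≤ α) (hα1 : α ≤ 1) (x y : H) :
    ‖⟪A x, y⟫_ℂ‖ ≤
      ‖cfc (fun t : ℝ => t ^ α) (oabs P) x‖ * ‖cfc (fun t : ℝ => t ^ (1 - α)) (oabs P) y‖ +
        ‖cfc (fun t : ℝ => t ^ α) (oabs Q) x‖ *
          ‖cfc (fun t : ℝ => t ^ (1 - α)) (oabs Q) y‖ := by
  have hsplit : ⟪A x, y⟫_ℂ = ⟪P x, y⟫_ℂ + (starRingEnd ℂ) Complex.I * ⟪Q x, y⟫_ℂ := by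
    rw [hA]
    simp [inner_add_left, inner_smul_left]
    ring
  calc ‖⟪A x, y⟫_ℂ‖ ≤ ‖⟪P x, y⟫_ℂ‖ + ‖(starRingEnd ℂ) Complex.I * ⟪Q x, y⟫_ℂ‖ := by
        rw [hsplit]; exact norm_add_le _ _
    _ = ‖⟪P x, y⟫_ℂ‖ + ‖⟪Q x, y⟫_ℂ‖ := by
        rw [norm_mul, RCLike.norm_conj, Complex.norm_I, one_mul]
    _ ≤ _ := add_le_add (key_ineq P hP α hα0 hα1 x y) (key_ineq Q hQ α hα0 hα1 x y)
end

section
/- Let A ∈ B(H) have Cartesian decomposition A = P + iQ, where P and Q are selfadjoint. Then the numerical radius satisfies w(A) ≤ (1/2) · ( ‖P‖ + ‖Q‖ + sqrt( (‖P‖ − ‖Q‖)² + 4·‖ |P|·|Q| ‖ ) ); equivalently, for every unit vector x ∈ H, |⟨Ax, x⟩| is bounded by this quantity. -/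
open scoped InnerProductSpace
open ContinuousLinearMap

section aux
variable {H : Type*} [NormedAddCommGroup H] [InnerProductSpace ℂ H] [CompleteSpace H]

lemma oabs_mul_self (P : H →L[ℂ] H) :
    oabs P * oabs P = adjoint P * P := by
  unfold oabs
  rw [← cfc_mul Real.sqrt Real.sqrt _ (by fun_prop) (by fun_prop)]
  have h2 : cfc (fun x => Real.sqrt x * Real.sqrt x) (adjoint P * P)
      = cfc (id : ℝ → ℝ) (adjoint P * P) :=
    cfc_congr (fun y hy => Real.mul_self_sqrt
      (spectrum_nonneg_of_nonneg (star_mul_self_nonneg P) hy))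
  exact h2.trans (cfc_id ℝ _ (IsSelfAdjoint.star_mul_self P))

lemma oabs_sa (P : H →L[ℂ] H) : IsSelfAdjoint (oabs P) := cfc_predicate _ _

lemma norm_comp_eq (P Q : H →L[ℂ] H) (hP : IsSelfAdjoint P) (hQ : IsSelfAdjoint Q) :
    ‖Q * P‖ = ‖oabs P * oabs Q‖ := by
  set R := oabs P with hR
  set W := oabs Q with hW
  have hRsa : star R = R := (oabs_sa P).star_eq
  have hWsa : star W = W := (oabs_sa Q).star_eq
  have hRR : R * R = P * P := by
    rw [hR, oabs_mul_self]; congr 1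
  have hWW : W * W = Q * Q := by
    rw [hW, oabs_mul_self]; congr 1
  have e1 : star (Q * P) * (Q * P) = star (W * P) * (W * P) := by
    simp only [star_mul, hP.star_eq, hQ.star_eq, hWsa]
    calc P * Q * (Q * P) = P * (Q * Q) * P := by noncomm_ring
    _ = P * (W * W) * P := by rw [hWW]
    _ = P * W * (W * P) := by noncomm_ring
  have e2 : (W * P) * star (W * P) = star (R * W) * (R * W) := by
    simp only [star_mul, hP.star_eq, hRsa, hWsa]
    calc W * P * (P * W) = W * (P * P) * W := by noncomm_ring
    _ = W * (R * R) * W := by rw [hRR]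
    _ = W * R * (R * W) := by noncomm_ring
  have n1 : ‖Q * P‖ * ‖Q * P‖ = ‖W * P‖ * ‖W * P‖ := by
    rw [← CStarRing.norm_star_mul_self (x := Q * P), e1,
      CStarRing.norm_star_mul_self]
  have n2 : ‖W * P‖ * ‖W * P‖ = ‖R * W‖ * ‖R * W‖ := by
    rw [← CStarRing.norm_self_mul_star (x := W * P), e2,
      CStarRing.norm_star_mul_self]
  have := n1.trans n2
  nlinarith [norm_nonneg (Q * P), norm_nonneg (R * W)]

lemma le_of_sq_le_sq'' {t s : ℝ} (h : t^2 ≤ s^2) (hs : 0 ≤ s) : t ≤ s := by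
  nlinarith [sq_nonneg (t-s), sq_nonneg (t+s)]

lemma inner_self_real (P : H →L[ℂ] H) (hP : IsSelfAdjoint P) (x : H) :
    ⟪P x, x⟫_ℂ = ((⟪P x, x⟫_ℂ).re : ℂ) := by
  have h : (starRingEnd ℂ) ⟪P x, x⟫_ℂ = ⟪P x, x⟫_ℂ := by
    have h1 : ⟪P x, x⟫_ℂ = ⟪x, P x⟫_ℂ := hP.isSymmetric x x
    rw [h1, inner_conj_symm, h1]
  exact (Complex.conj_eq_iff_re.mp h).symm

end aux

set_option maxHeartbeats 1000000 in
theorem stmt19 {H : Type*} [NormedAddCommGroup H] [InnerProductSpace ℂ H] [CompleteSpace H]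
    (A P Q : H →L[ℂ] H) (hP : IsSelfAdjoint P) (hQ : IsSelfAdjoint Q)
    (hA : A = P + Complex.I • Q)
    (x : H) (hx : ‖x‖ = 1) :
    ‖⟪A x, x⟫_ℂ‖ ≤
      1 / 2 * (‖P‖ + ‖Q‖ +
        Real.sqrt ((‖P‖ - ‖Q‖) ^ 2 + 4 * ‖oabs P * oabs Q‖)) := by
  set p := ‖P‖ with hp
  set q := ‖Q‖ with hq
  have hc : ‖Q * P‖ = ‖oabs P * oabs Q‖ := norm_comp_eq P Q hP hQ
  rw [← hc]
  set c := ‖Q * P‖ with hcdef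
  set a := ‖P x‖ with ha
  set b := ‖Q x‖ with hb
  set α := (⟪P x, x⟫_ℂ).re with hα
  set β := (⟪Q x, x⟫_ℂ).re with hβ
  have hp0 : 0 ≤ p := norm_nonneg _
  have hq0 : 0 ≤ q := norm_nonneg _
  have hc0 : 0 ≤ c := norm_nonneg _
  have ha0 : 0 ≤ a := norm_nonneg _
  have hb0 : 0 ≤ b := norm_nonneg _
  -- value of the inner product
  have hz : ⟪A x, x⟫_ℂ = Complex.mk α (-β) := by
    rw [hA]
    have h1 : ⟪P x, x⟫_ℂ = (α : ℂ) := inner_self_real P hP x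
    have h2 : ⟪Q x, x⟫_ℂ = (β : ℂ) := inner_self_real Q hQ x
    simp only [ContinuousLinearMap.add_apply, ContinuousLinearMap.smul_apply,
      inner_add_left, inner_smul_left, h1, h2]
    simp [Complex.ext_iff]
  have hnz : ‖⟪A x, x⟫_ℂ‖ = Real.sqrt (α^2 + β^2) := by
    rw [hz, Complex.norm_def, Complex.normSq_apply]
    norm_num; ring_nf
  -- |α| ≤ a, |β| ≤ b
  have hαa : α^2 ≤ a^2 := by
    have h1 : |α| ≤ ‖⟪P x, x⟫_ℂ‖ := Complex.abs_re_le_norm _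
    have h2 : ‖⟪P x, x⟫_ℂ‖ ≤ a * 1 := by
      rw [← hx]; exact norm_inner_le_norm _ _
    nlinarith [abs_nonneg α, sq_abs α]
  have hβb : β^2 ≤ b^2 := by
    have h1 : |β| ≤ ‖⟪Q x, x⟫_ℂ‖ := Complex.abs_re_le_norm _
    have h2 : ‖⟪Q x, x⟫_ℂ‖ ≤ b * 1 := by
      rw [← hx]; exact norm_inner_le_norm _ _
    nlinarith [abs_nonneg β, sq_abs β]
  -- z = (P²+Q²)x
  set z := (P * P + Q * Q) x with hzdef
  have h3 : a^2 + b^2 ≤ ‖z‖ := by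
    have e1 : ⟪(P * P) x, x⟫_ℂ = ((a:ℂ))^2 := by
      calc ⟪(P * P) x, x⟫_ℂ = ⟪P x, P x⟫_ℂ := by
              rw [ContinuousLinearMap.mul_apply]; exact hP.isSymmetric (P x) x
      _ = ((a:ℂ))^2 := by rw [inner_self_eq_norm_sq_to_K]; norm_num; rfl
    have e2 : ⟪(Q * Q) x, x⟫_ℂ = ((b:ℂ))^2 := by
      calc ⟪(Q * Q) x, x⟫_ℂ = ⟪Q x, Q x⟫_ℂ := by
              rw [ContinuousLinearMap.mul_apply]; exact hQ.isSymmetric (Q x) x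
      _ = ((b:ℂ))^2 := by rw [inner_self_eq_norm_sq_to_K]; norm_num; rfl
    have e : ⟪z, x⟫_ℂ = ((a:ℂ))^2 + ((b:ℂ))^2 := by
      rw [hzdef]
      rw [ContinuousLinearMap.add_apply, inner_add_left, e1, e2]
    have hle : ‖⟪z, x⟫_ℂ‖ ≤ ‖z‖ := by
      have := norm_inner_le_norm (𝕜 := ℂ) z x
      rwa [hx, mul_one] at this
    have : ‖⟪z, x⟫_ℂ‖ = a^2 + b^2 := by
      rw [e]
      norm_cast
      exact Real.norm_of_nonneg (by positivity)
    linarith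
  -- bound on ‖z‖²
  have h4 : ‖z‖^2 ≤ p^2*a^2 + 2*c*a*b + q^2*b^2 := by
    have hzz : ‖z‖^2 = ‖(P*P) x‖^2 + 2 * (⟪(P*P) x, (Q*Q) x⟫_ℂ).re + ‖(Q*Q) x‖^2 := by
      rw [hzdef, ContinuousLinearMap.add_apply]
      have := norm_add_sq (𝕜 := ℂ) ((P*P) x) ((Q*Q) x)
      simpa [RCLike.re_to_complex] using this
    have hu : ‖(P*P) x‖ ≤ p * a := by
      rw [ContinuousLinearMap.mul_apply]
      exact P.le_opNorm (P x)
    have hv : ‖(Q*Q) x‖ ≤ q * b := by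
      rw [ContinuousLinearMap.mul_apply]
      exact Q.le_opNorm (Q x)
    have hcross : (⟪(P*P) x, (Q*Q) x⟫_ℂ).re ≤ c * a * b := by
      have he : ⟪(P*P) x, (Q*Q) x⟫_ℂ = ⟪(Q * (P*P)) x, Q x⟫_ℂ := by
        calc ⟪(P*P) x, (Q*Q) x⟫_ℂ = ⟪(P*P) x, Q (Q x)⟫_ℂ := by
              rw [ContinuousLinearMap.mul_apply (f := Q)]
        _ = ⟪Q ((P*P) x), Q x⟫_ℂ := (hQ.isSymmetric ((P*P) x) (Q x)).symm
        _ = ⟪(Q * (P*P)) x, Q x⟫_ℂ := by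
              simp only [ContinuousLinearMap.mul_apply]
      have h5 : |(⟪(P*P) x, (Q*Q) x⟫_ℂ).re| ≤ ‖⟪(P*P) x, (Q*Q) x⟫_ℂ‖ :=
        Complex.abs_re_le_norm _
      have h6 : ‖⟪(P*P) x, (Q*Q) x⟫_ℂ‖ ≤ c * a * b := by
        rw [he]
        have hqpp : ‖(Q * (P*P)) x‖ ≤ c * a := by
          rw [ContinuousLinearMap.mul_apply, ContinuousLinearMap.mul_apply]
          calc ‖Q (P (P x))‖ = ‖(Q * P) (P x)‖ := by
                rw [ContinuousLinearMap.mul_apply]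
          _ ≤ c * a := (Q * P).le_opNorm (P x)
        calc ‖⟪(Q * (P*P)) x, Q x⟫_ℂ‖ ≤ ‖(Q * (P*P)) x‖ * ‖Q x‖ :=
          norm_inner_le_norm _ _
        _ ≤ (c * a) * b := by
          have h0 : ‖Q x‖ = b := rfl
          rw [h0]
          exact mul_le_mul_of_nonneg_right hqpp hb0
        _ = c * a * b := by ring
      calc (⟪(P*P) x, (Q*Q) x⟫_ℂ).re ≤ |(⟪(P*P) x, (Q*Q) x⟫_ℂ).re| := le_abs_self _
      _ ≤ c * a * b := h5.trans h6
    have hu0 : 0 ≤ ‖(P*P) x‖ := norm_nonneg _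
    have hv0 : 0 ≤ ‖(Q*Q) x‖ := norm_nonneg _
    nlinarith [mul_le_mul hu hu hu0 (by positivity : (0:ℝ) ≤ p * a),
      mul_le_mul hv hv hv0 (by positivity : (0:ℝ) ≤ q * b)]
  -- scalar step: quadratic form bound
  set s₁ := Real.sqrt ((p^2 - q^2)^2 + 4*c^2) with hs₁
  have hs₁0 : 0 ≤ s₁ := Real.sqrt_nonneg _
  have hs₁sq : s₁^2 = (p^2 - q^2)^2 + 4*c^2 := Real.sq_sqrt (by positivity)
  set μ := ((p^2 + q^2) + s₁) / 2 with hμ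
  have h5 : p^2*a^2 + 2*c*a*b + q^2*b^2 ≤ μ * (a^2 + b^2) := by
    have key : (p^2 - q^2)*(a^2 - b^2) + 4*c*(a*b) ≤ s₁*(a^2 + b^2) := by
      have hT2 : ((p^2 - q^2)*(a^2 - b^2) + 4*c*(a*b))^2 ≤ (s₁*(a^2 + b^2))^2 := by
        have expand : (s₁*(a^2 + b^2))^2 = ((p^2 - q^2)^2 + 4*c^2) * (a^2+b^2)^2 := by
          rw [mul_pow, hs₁sq]
        rw [expand]
        linarith [sq_nonneg ((p^2-q^2)*(2*a*b) - 2*c*(a^2-b^2))]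
      exact le_of_sq_le_sq'' hT2 (by positivity)
    rw [hμ]
    linarith [key]
  -- a² + b² ≤ μ
  have h6 : a^2 + b^2 ≤ μ := by
    have hsq : (a^2+b^2)^2 ≤ ‖z‖^2 := by
      have := pow_le_pow_left₀ (by positivity : (0:ℝ) ≤ a^2+b^2) h3 2
      exact this
    have hchain : (a^2+b^2)^2 ≤ μ * (a^2+b^2) := le_trans hsq (le_trans h4 h5)
    rcases eq_or_lt_of_le (by positivity : (0:ℝ) ≤ a^2 + b^2) with h | h
    · have hμ0 : (0:ℝ) ≤ μ := by rw [hμ]; positivity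
      linarith [h.symm.le]
    · have h2 : (a^2+b^2)*(a^2+b^2) ≤ μ * (a^2+b^2) := by
        nlinarith [hchain]
      exact le_of_mul_le_mul_right h2 h
  -- final: sqrt μ ≤ RHS
  set s₂ := Real.sqrt ((p - q)^2 + 4*c) with hs₂
  have hs₂0 : 0 ≤ s₂ := Real.sqrt_nonneg _
  have hs₂sq : s₂^2 = (p - q)^2 + 4*c := Real.sq_sqrt (by positivity)
  have h7 : μ ≤ (1/2 * (p + q + s₂))^2 := by
    have h8 : s₁ ≤ 2*c + (p+q)*s₂ := by
      have hsq : s₁^2 ≤ (2*c + (p+q)*s₂)^2 := by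
        rw [hs₁sq]
        have e : (2*c + (p+q)*s₂)^2 = 4*c^2 + 4*c*(p+q)*s₂ + (p+q)^2 * s₂^2 := by ring
        rw [e, hs₂sq]
        nlinarith [mul_nonneg (mul_nonneg (by positivity : (0:ℝ) ≤ 4*c) (by positivity : (0:ℝ) ≤ p+q)) hs₂0,
          mul_nonneg hc0 (sq_nonneg (p+q))]
      exact le_of_sq_le_sq'' hsq (by positivity)
    have e2 : (1/2 * (p + q + s₂))^2 = (p^2+q^2)/2 + c + (p+q)*s₂/2 + ((p-q)^2 + 4*c - s₂^2)/4 := by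
      ring_nf
      nlinarith [hs₂sq]
    rw [hμ]
    nlinarith [hs₂sq, h8]
  rw [hnz]
  calc Real.sqrt (α^2 + β^2) ≤ Real.sqrt μ := by
        apply Real.sqrt_le_sqrt; linarith
  _ ≤ 1/2 * (p + q + s₂) := by
        rw [show (1/2 * (p + q + s₂)) = Real.sqrt ((1/2 * (p + q + s₂))^2) from
          (Real.sqrt_sq (by positivity)).symm]
        exact Real.sqrt_le_sqrt h7
end
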